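/- arXiv:2103.17170 — 4 statements merged into one kernel-verified Lean document; each statement's English description precedes it below -/
import Mathlib

section
/- In the Coxeter group with generators ρ₀, ρ₁, ρ₂ of order 2 satisfying (ρ₀ρ₂)² = 1, for every j ≥ 2 the relation (ρ₀ρ₁(ρ₂ρ₁)^{j-1})⁴ = 1 holds if and only if ((ρ₀ρ₁ρ₀ρ₂)^{j-1}·ρ₀ρ₁ρ₀·ρ₁(ρ₂ρ₁)^{j-1})² = 1, i.e. setting ρ̃₀ := ρ₀ρ₁ρ₀ one has (ρ₀ρ₁(ρ₂ρ₁)^{j-1})⁴ = ((ρ̃₀ρ₂)^{j-1}ρ̃₀ρ₁(ρ₂ρ₁)^{j-1})². -/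
/-- In a group generated by involutions `ρ₀, ρ₁, ρ₂` with `(ρ₀ρ₂)² = 1`, for every `j ≥ 2`,
setting `ρ̃₀ := ρ₀ρ₁ρ₀`, one has
`(ρ₀ρ₁(ρ₂ρ₁)^{j-1})⁴ = ((ρ̃₀ρ₂)^{j-1} ρ̃₀ ρ₁ (ρ₂ρ₁)^{j-1})²`. -/
theorem stmt0 {G : Type*} [Group G] (ρ₀ ρ₁ ρ₂ : G)
    (h0 : ρ₀ ^ 2 = 1) (h1 : ρ₁ ^ 2 = 1) (h2 : ρ₂ ^ 2 = 1)
    (hc : (ρ₀ * ρ₂) ^ 2 = 1) (j : ℕ) (hj : 2 ≤ j) :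
    (ρ₀ * ρ₁ * (ρ₂ * ρ₁) ^ (j - 1)) ^ 4 =
      (((ρ₀ * ρ₁ * ρ₀) * ρ₂) ^ (j - 1) * (ρ₀ * ρ₁ * ρ₀) * ρ₁ * (ρ₂ * ρ₁) ^ (j - 1)) ^ 2 := by
  set k := j - 1 with hk
  have i00 : ρ₀ * ρ₀ = 1 := by rw [← sq]; exact h0
  have i11 : ρ₁ * ρ₁ = 1 := by rw [← sq]; exact h1
  have i0 : ρ₀⁻¹ = ρ₀ := inv_eq_of_mul_eq_one_right i00
  have i1 : ρ₁⁻¹ = ρ₁ := inv_eq_of_mul_eq_one_right i11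
  have hcomm : ρ₀ * ρ₂ = ρ₂ * ρ₀ := by
    have h : (ρ₀ * ρ₂)⁻¹ = ρ₀ * ρ₂ := inv_eq_of_mul_eq_one_right (by rw [← sq]; exact hc)
    have h2' : ρ₂⁻¹ = ρ₂ := inv_eq_of_mul_eq_one_right (by rw [← sq]; exact h2)
    calc ρ₀ * ρ₂ = (ρ₀ * ρ₂)⁻¹ := h.symm
    _ = ρ₂ * ρ₀ := by rw [mul_inv_rev, i0, h2']
  have L1 : ((ρ₀ * ρ₁ * ρ₀) * ρ₂) ^ k = ρ₀ * (ρ₁ * ρ₂) ^ k * ρ₀ := by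
    have e : (ρ₀ * ρ₁ * ρ₀) * ρ₂ = ρ₀ * (ρ₁ * ρ₂) * ρ₀⁻¹ := by
      rw [i0, mul_assoc (ρ₀ * ρ₁), hcomm]
      group
    rw [e, conj_pow, i0]
  have L2 : ρ₁ * (ρ₂ * ρ₁) ^ k = (ρ₁ * ρ₂) ^ k * ρ₁ := by
    have e : ρ₁ * (ρ₂ * ρ₁) * ρ₁⁻¹ = ρ₁ * ρ₂ := by
      rw [i1]; simp only [mul_assoc, i11, mul_one]
    have h := conj_pow (a := ρ₁) (b := ρ₂ * ρ₁) (i := k)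
    rw [e] at h
    rw [h]
    group
  set X := (ρ₂ * ρ₁) ^ k
  set Y := (ρ₁ * ρ₂) ^ k
  have key : ((ρ₀ * ρ₁ * ρ₀) * ρ₂) ^ k * (ρ₀ * ρ₁ * ρ₀) * ρ₁ * X
      = (ρ₀ * ρ₁ * X) ^ 2 := by
    rw [L1, sq]
    have cancel0 : ∀ z : G, ρ₀ * (ρ₀ * z) = z := fun z => by
      rw [← mul_assoc, i00, one_mul]
    have hYX : ∀ w : G, Y * (ρ₁ * w) = ρ₁ * (X * w) := fun w => by
      rw [← mul_assoc, ← L2, mul_assoc]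
    simp only [mul_assoc, cancel0, hYX]
  rw [key, ← pow_mul]
end

section
/- In a group G generated by involutions ρ₀,…,ρₙ with (ρ₀ρᵢ)² = 1 for 2 ≤ i ≤ n, set β := ρ₁ρ₂⋯ρₙ, ρ̃₀ := ρ₀ρ₁ρ₀ and β̃ := ρ̃₀ρ₂⋯ρₙ. Then for every i ≥ 1 and k ≥ 1, (ρ₀β^{-i}ρ₀βⁱ)^k = (β̃^{-i}βⁱ)^k; in particular (ρ₀β^{-i}ρ₀βⁱ)^k = 1 if and only if (β̃^{-i}βⁱ)^k = 1. -/
/-- In a group generated by involutions `ρ₀,…,ρₙ` with `(ρ₀ρᵢ)² = 1` for `2 ≤ i ≤ n`, setting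
`β := ρ₁ρ₂⋯ρₙ`, `ρ̃₀ := ρ₀ρ₁ρ₀` and `β̃ := ρ̃₀ρ₂⋯ρₙ`, for all `i ≥ 1` and `k ≥ 1` one has
`(ρ₀β^{-i}ρ₀βⁱ)^k = (β̃^{-i}βⁱ)^k`; in particular one is trivial iff the other is. -/
theorem stmt9 {G : Type*} [Group G] (n : ℕ) (hn : 3 ≤ n) (ρ : ℕ → G)
    (hinv : ∀ i ≤ n, ρ i ^ 2 = 1)
    (hcomm : ∀ i, 2 ≤ i → i ≤ n → (ρ 0 * ρ i) ^ 2 = 1)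
    (i k : ℕ) (hi : 1 ≤ i) (hk : 1 ≤ k) :
    (ρ 0 * (((List.range' 1 n).map ρ).prod) ^ (-(i : ℤ)) * ρ 0 *
        (((List.range' 1 n).map ρ).prod) ^ (i : ℤ)) ^ k =
      (((ρ 0 * ρ 1 * ρ 0) * ((List.range' 2 (n - 1)).map ρ).prod) ^ (-(i : ℤ)) *
        (((List.range' 1 n).map ρ).prod) ^ (i : ℤ)) ^ k ∧
    ((ρ 0 * (((List.range' 1 n).map ρ).prod) ^ (-(i : ℤ)) * ρ 0 *
        (((List.range' 1 n).map ρ).prod) ^ (i : ℤ)) ^ k = 1 ↔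
      (((ρ 0 * ρ 1 * ρ 0) * ((List.range' 2 (n - 1)).map ρ).prod) ^ (-(i : ℤ)) *
        (((List.range' 1 n).map ρ).prod) ^ (i : ℤ)) ^ k = 1) := by
  set β := ((List.range' 1 n).map ρ).prod with hβ
  set P := ((List.range' 2 (n - 1)).map ρ).prod with hP
  have h0inv : (ρ 0)⁻¹ = ρ 0 := by
    have := hinv 0 (by omega)
    rw [sq] at this
    exact inv_eq_of_mul_eq_one_right this
  -- each ρ j for j ∈ range' 2 (n-1) commutes with ρ 0
  have hc : ∀ x ∈ (List.range' 2 (n - 1)).map ρ, Commute (ρ 0) x := by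
    intro x hx
    obtain ⟨j, hj, rfl⟩ := List.mem_map.mp hx
    rw [List.mem_range'] at hj
    obtain ⟨m, hm, rfl⟩ := hj
    have hj2 : 2 ≤ 2 + 1 * m := by omega
    have hjn : 2 + 1 * m ≤ n := by omega
    set j := 2 + 1 * m
    have hjinv : (ρ j)⁻¹ = ρ j := by
      have := hinv j hjn
      rw [sq] at this
      exact inv_eq_of_mul_eq_one_right this
    have := hcomm j hj2 hjn
    rw [sq] at this
    have h1 : ρ 0 * ρ j = (ρ 0 * ρ j)⁻¹ := by
      exact eq_inv_of_mul_eq_one_right this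
    rw [mul_inv_rev, h0inv, hjinv] at h1
    exact h1
  have hPcomm : Commute (ρ 0) P := Commute.list_prod_right _ _ hc
  -- β = ρ 1 * P
  have hsplit : β = ρ 1 * P := by
    rw [hβ, hP]
    have : n = (n - 1) + 1 := by omega
    rw [this, List.range'_succ, List.map_cons, List.prod_cons]
    norm_num
  have hkey : ρ 0 * ρ 1 * ρ 0 * P = ρ 0 * β * (ρ 0)⁻¹ := by
    rw [h0inv, hsplit]
    calc ρ 0 * ρ 1 * ρ 0 * P = ρ 0 * ρ 1 * (ρ 0 * P) := by group
      _ = ρ 0 * ρ 1 * (P * ρ 0) := by rw [hPcomm.eq]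
      _ = ρ 0 * (ρ 1 * P) * ρ 0 := by group
  have hbase : ρ 0 * β ^ (-(i : ℤ)) * ρ 0 * β ^ (i : ℤ) =
      (ρ 0 * ρ 1 * ρ 0 * P) ^ (-(i : ℤ)) * β ^ (i : ℤ) := by
    rw [hkey]
    rw [conj_zpow]
    rw [h0inv]
  rw [hbase]
  exact ⟨rfl, Iff.rfl⟩
end

section
/- The group [4, 2p | 4^{p-2}, 2s], defined as the quotient of the Coxeter group [4,2p] by the relations (ρ₀ρ₁(ρ₂ρ₁)^{j-1})⁴ = 1 for 2 ≤ j ≤ p−1 and (ρ₀ρ₁(ρ₂ρ₁)^{p-1})^{2s} = 1, is isomorphic to D_s^p ⋊ D_{2p} and has order (2s)^p · 4p. -/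
open DihedralGroup

set_option linter.unusedSectionVars false

/-- The defining relators of the group `[4, 2p | 4^{p-2}, 2s]`: the Coxeter relations of
`[4,2p]` together with `(ρ₀ρ₁(ρ₂ρ₁)^{j-1})⁴` for `2 ≤ j ≤ p−1` and
`(ρ₀ρ₁(ρ₂ρ₁)^{p-1})^{2s}`. -/
def relsStmt11 (p s : ℕ) : Set (FreeGroup (Fin 3)) :=
  letI a := FreeGroup.of (0 : Fin 3)
  letI b := FreeGroup.of (1 : Fin 3)
  letI c := FreeGroup.of (2 : Fin 3)
  {a ^ 2, b ^ 2, c ^ 2, (a * b) ^ 4, (b * c) ^ (2 * p), (a * c) ^ 2,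
      (a * b * (c * b) ^ (p - 1)) ^ (2 * s)} ∪
    (fun j => (a * b * (c * b) ^ (j - 1)) ^ 4) '' {j | 2 ≤ j ∧ j ≤ p - 1}


namespace Stmt11Aux

variable (s : ℕ)

/-- The automorphism of `D_s` swapping the reflections `sr 0` and `sr 1`. -/
def tau : DihedralGroup s → DihedralGroup s
  | r k => r (-k)
  | sr k => sr (1 - k)

lemma tau_mul (x y : DihedralGroup s) : tau s (x * y) = tau s x * tau s y := by
  rcases x with i | i <;> rcases y with j | j <;>
    simp only [tau, r_mul_r, r_mul_sr, sr_mul_r, sr_mul_sr] <;> ring_nf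

lemma tau_one : tau s 1 = 1 := by
  rw [one_def]; show r (-0) = r 0; rw [neg_zero]

lemma tau_tau (x : DihedralGroup s) : tau s (tau s x) = x := by
  rcases x with i | i <;> simp [tau]

variable (p : ℕ) [NeZero p]

instance : NeZero (2 * p) := ⟨by have := NeZero.ne p; omega⟩

/-- The action of `D_{2p}` on the vertices `ZMod (2p)` of the `2p`-gon. -/
def th : DihedralGroup (2 * p) → ZMod (2 * p) → ZMod (2 * p)
  | r i, v => v - i
  | sr j, v => j - v

lemma th_mul (x y : DihedralGroup (2 * p)) (v : ZMod (2 * p)) :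
    th p (x * y) v = th p x (th p y v) := by
  rcases x with i | i <;> rcases y with j | j <;>
    simp only [th, r_mul_r, r_mul_sr, sr_mul_r, sr_mul_sr] <;> ring

lemma th_one (v : ZMod (2 * p)) : th p 1 v = v := by
  rw [one_def]; show v - 0 = v; rw [sub_zero]

lemma th_inv_th (x : DihedralGroup (2 * p)) (v : ZMod (2 * p)) :
    th p x (th p x⁻¹ v) = v := by
  rw [← th_mul, mul_inv_cancel, th_one]

lemma th_th_inv (x : DihedralGroup (2 * p)) (v : ZMod (2 * p)) :
    th p x⁻¹ (th p x v) = v := by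
  rw [← th_mul, inv_mul_cancel, th_one]

lemma th_eq_iff (x : DihedralGroup (2 * p)) (v w : ZMod (2 * p)) :
    th p x⁻¹ v = w ↔ v = th p x w := by
  constructor
  · rintro rfl; rw [th_inv_th]
  · rintro rfl; rw [th_th_inv]

lemma coe_p_ne_zero (hp : 2 ≤ p) : ((p : ZMod (2 * p))) ≠ 0 := by
  intro h
  have := congrArg ZMod.val h
  rw [ZMod.val_natCast_of_lt (by omega), ZMod.val_zero] at this
  omega

lemma neg_coe_p (hp : 2 ≤ p) : -((p : ZMod (2 * p))) = (p : ZMod (2 * p)) := by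
  have h : ((2 * p : ℕ) : ZMod (2 * p)) = 0 := ZMod.natCast_self _
  push_cast at h
  linear_combination -h

lemma th_add_p (x : DihedralGroup (2 * p)) (v : ZMod (2 * p)) (hp : 2 ≤ p) :
    th p x (v + (p : ZMod (2 * p))) = th p x v + (p : ZMod (2 * p)) := by
  rcases x with i | i <;> simp only [th]
  · ring
  · have := neg_coe_p p hp
    linear_combination this


variable {p}

lemma mod_helper {m : ℕ} (h1 : p ≤ m) (h2 : m < 2 * p) : m % p = m - p := by
  rw [Nat.mod_eq_sub_mod h1, Nat.mod_eq_of_lt (by omega)]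

/-- Index in `Fin p` of a vertex. -/
def idx (v : ZMod (2 * p)) : Fin p := ⟨v.val % p, Nat.mod_lt _ (Nat.pos_of_ne_zero (NeZero.ne p))⟩

lemma idx_coe (v : ZMod (2 * p)) : (idx v : ℕ) = v.val % p := rfl

/-- The vertex in the "first half" corresponding to an index. -/
def uc (i : Fin p) : ZMod (2 * p) := ((i : ℕ) : ZMod (2 * p))

lemma uc_val (i : Fin p) : (uc i : ZMod (2 * p)).val = (i : ℕ) :=
  ZMod.val_natCast_of_lt (by omega)

lemma idx_uc (i : Fin p) : idx (uc i) = i := by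
  ext
  simp [idx, uc_val, Nat.mod_eq_of_lt i.isLt]

lemma uc_idx {v : ZMod (2 * p)} (h : v.val < p) : uc (idx v) = v := by
  have : (idx v : ℕ) = v.val := by rw [idx_coe, Nat.mod_eq_of_lt h]
  rw [uc, this, ZMod.natCast_rightInverse v]

lemma uc_idx' {v : ZMod (2 * p)} (h : ¬ v.val < p) : uc (idx v) + (p : ZMod (2 * p)) = v := by
  have hv : v.val < 2 * p := v.val_lt
  have : (idx v : ℕ) = v.val - p := by rw [idx_coe, mod_helper (by omega) hv]
  rw [uc, this, ← Nat.cast_add, Nat.sub_add_cancel (by omega), ZMod.natCast_rightInverse v]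

/-- Lift of `f : Fin p → D_s` to a "τ-odd" function on all vertices. -/
def hv (f : Fin p → DihedralGroup s) (v : ZMod (2 * p)) : DihedralGroup s :=
  if v.val < p then f (idx v) else tau s (f (idx v))

variable {s}

lemma hv_mul (f g : Fin p → DihedralGroup s) (v : ZMod (2 * p)) :
    hv s (f * g) v = hv s f v * hv s g v := by
  unfold hv
  split <;> simp [tau_mul]

lemma hv_uc (f : Fin p → DihedralGroup s) (i : Fin p) : hv s f (uc i) = f i := by
  rw [hv, if_pos (by rw [uc_val]; exact i.isLt), idx_uc]

lemma val_add_p (v : ZMod (2 * p)) (hp : 2 ≤ p) :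
    (v + (p : ZMod (2 * p))).val = if v.val < p then v.val + p else v.val - p := by
  have hv2 : v.val < 2 * p := v.val_lt
  rw [ZMod.val_add, ZMod.val_natCast_of_lt (show p < 2 * p by omega)]
  split
  · rw [Nat.mod_eq_of_lt (by omega)]
  · rw [Nat.mod_eq_sub_mod (by omega), Nat.mod_eq_of_lt (by omega)]
    omega

lemma idx_add_p (v : ZMod (2 * p)) (hp : 2 ≤ p) : idx (v + (p : ZMod (2 * p))) = idx v := by
  have hv2 : v.val < 2 * p := v.val_lt
  ext
  rw [idx_coe, idx_coe, val_add_p v hp]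
  by_cases h : v.val < p
  · rw [if_pos h, Nat.mod_eq_sub_mod (by omega), Nat.add_sub_cancel, Nat.mod_eq_of_lt h]
  · rw [if_neg h, Nat.mod_eq_of_lt (by omega), mod_helper (by omega) hv2]

lemma add_p_p (v : ZMod (2 * p)) : v + (p : ZMod (2 * p)) + (p : ZMod (2 * p)) = v := by
  have h : ((2 * p : ℕ) : ZMod (2 * p)) = 0 := ZMod.natCast_self _
  push_cast at h
  linear_combination h

lemma hv_add_p (f : Fin p → DihedralGroup s) (v : ZMod (2 * p)) (hp : 2 ≤ p) :
    hv s f (v + (p : ZMod (2 * p))) = tau s (hv s f v) := by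
  have hv2 : v.val < 2 * p := v.val_lt
  by_cases h : v.val < p
  · simp only [hv, val_add_p v hp, idx_add_p v hp, if_pos h,
      if_neg (show ¬ v.val + p < p by omega)]
  · simp only [hv, val_add_p v hp, idx_add_p v hp, if_neg h,
      if_pos (show v.val - p < p by omega), tau_tau]

/-- The raw (contravariant) action of `D_{2p}` on `Fin p → D_s`. -/
def act (d : DihedralGroup (2 * p)) (f : Fin p → DihedralGroup s) : Fin p → DihedralGroup s :=
  fun i => hv s f (th p d (uc i))

lemma hv_act (hp : 2 ≤ p) (d : DihedralGroup (2 * p)) (f : Fin p → DihedralGroup s)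
    (v : ZMod (2 * p)) : hv s (act d f) v = hv s f (th p d v) := by
  by_cases h : v.val < p
  · rw [hv, if_pos h, act, uc_idx h]
  · rw [hv, if_neg h, act, ← tau_tau s (hv s f (th p d v)), ← hv_add_p f (th p d v) hp]
    have h2 : (p : ZMod (2 * p)) + (p : ZMod (2 * p)) = 0 := by
      have h0 : ((2 * p : ℕ) : ZMod (2 * p)) = 0 := ZMod.natCast_self _
      push_cast at h0
      linear_combination h0
    have harg : v + (p : ZMod (2 * p)) = uc (idx v) := by linear_combination - uc_idx' h + h2
    congr 2
    rw [← th_add_p p d _ hp, harg]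

lemma act_act (hp : 2 ≤ p) (d d' : DihedralGroup (2 * p)) (f : Fin p → DihedralGroup s) :
    act d (act d' f) = act (d' * d) f := by
  funext i
  rw [act, hv_act hp, act, th_mul]

lemma act_one (f : Fin p → DihedralGroup s) : act (1 : DihedralGroup (2 * p)) f = f := by
  funext i
  rw [act, th_one, hv_uc]

lemma act_mul (d : DihedralGroup (2 * p)) (f g : Fin p → DihedralGroup s) :
    act d (f * g) = act d f * act d g := by
  funext i
  simp [act, hv_mul]

/-- The action `φ` of `D_{2p}` on `D_s^p`. -/
def phi (hp : 2 ≤ p) : DihedralGroup (2 * p) →* MulAut (Fin p → DihedralGroup s) where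
  toFun d :=
    { toFun := act d⁻¹
      invFun := act d
      left_inv := fun f => by rw [act_act hp, inv_mul_cancel, act_one]
      right_inv := fun f => by rw [act_act hp, mul_inv_cancel, act_one]
      map_mul' := fun f g => act_mul d⁻¹ f g }
  map_one' := by ext f i; show act (1 : DihedralGroup (2*p))⁻¹ f i = f i; rw [inv_one, act_one]
  map_mul' := fun d₁ d₂ => by
    ext f i
    show act (d₁ * d₂)⁻¹ f i = act d₁⁻¹ (act d₂⁻¹ f) i
    rw [act_act hp, mul_inv_rev]

lemma phi_apply (hp : 2 ≤ p) (d : DihedralGroup (2 * p)) (f : Fin p → DihedralGroup s) :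
    phi hp d f = act d⁻¹ f := rfl


lemma uc_idx_eq {v : ZMod (2 * p)} (hp : 2 ≤ p) (h : ¬ v.val < p) :
    uc (idx v) = v + (p : ZMod (2 * p)) := by
  have h2 : (p : ZMod (2 * p)) + (p : ZMod (2 * p)) = 0 := by
    have h0 : ((2 * p : ℕ) : ZMod (2 * p)) = 0 := ZMod.natCast_self _
    push_cast at h0
    linear_combination h0
  linear_combination uc_idx' h - h2

lemma add_p_ne (hp : 2 ≤ p) (u : ZMod (2 * p)) : u + (p : ZMod (2 * p)) ≠ u := by
  intro h
  exact coe_p_ne_zero p hp (by linear_combination h)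

lemma eq_add_p_of_add_p_eq (hp : 2 ≤ p) {v u : ZMod (2 * p)} (h : v + (p : ZMod (2 * p)) = u) :
    v = u + (p : ZMod (2 * p)) := by
  rw [← h, add_p_p]

variable (s)

/-- The function on vertices supported on an antipodal pair. -/
def sgl (u : ZMod (2 * p)) (x : DihedralGroup s) (v : ZMod (2 * p)) : DihedralGroup s :=
  if v = u then x else if v = u + (p : ZMod (2 * p)) then tau s x else 1

/-- The element of `D_s^p` corresponding to `x` placed at vertex `u`. -/
def sg (u : ZMod (2 * p)) (x : DihedralGroup s) : Fin p → DihedralGroup s :=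
  fun i => sgl s u x (uc i)

variable {s}

lemma sgl_mul (hp : 2 ≤ p) (u : ZMod (2 * p)) (x y : DihedralGroup s) (v : ZMod (2 * p)) :
    sgl s u x v * sgl s u y v = sgl s u (x * y) v := by
  unfold sgl
  by_cases h1 : v = u
  · rw [if_pos h1, if_pos h1, if_pos h1]
  · rw [if_neg h1, if_neg h1, if_neg h1]
    by_cases h2 : v = u + (p : ZMod (2 * p))
    · rw [if_pos h2, if_pos h2, if_pos h2, tau_mul]
    · rw [if_neg h2, if_neg h2, if_neg h2, one_mul]

lemma sgl_one (u v : ZMod (2 * p)) : sgl s u (1 : DihedralGroup s) v = 1 := by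
  unfold sgl
  rw [tau_one]
  split <;> [rfl; split <;> rfl]

lemma sg_mul (hp : 2 ≤ p) (u : ZMod (2 * p)) (x y : DihedralGroup s) :
    sg s u x * sg s u y = sg s u (x * y) := by
  funext i
  exact sgl_mul hp u x y (uc i)

lemma sg_one (u : ZMod (2 * p)) : sg s u (1 : DihedralGroup s) = 1 := by
  funext i
  exact sgl_one u (uc i)

lemma sgl_add_p (hp : 2 ≤ p) (u : ZMod (2 * p)) (x : DihedralGroup s) (v : ZMod (2 * p)) :
    sgl s u x (v + (p : ZMod (2 * p))) = tau s (sgl s u x v) := by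
  unfold sgl
  by_cases h1 : v = u
  · subst h1
    rw [if_neg (add_p_ne hp v), if_pos rfl, if_pos rfl]
  · by_cases h2 : v = u + (p : ZMod (2 * p))
    · subst h2
      rw [if_pos (add_p_p u), if_neg h1, if_pos rfl, tau_tau]
    · have g1 : v + (p : ZMod (2 * p)) ≠ u := fun h => h2 (eq_add_p_of_add_p_eq hp h)
      have g2 : v + (p : ZMod (2 * p)) ≠ u + (p : ZMod (2 * p)) := fun h =>
        h1 (by linear_combination h)
      rw [if_neg g1, if_neg g2, if_neg h1, if_neg h2, tau_one]

lemma hv_sg (hp : 2 ≤ p) (u : ZMod (2 * p)) (x : DihedralGroup s) (v : ZMod (2 * p)) :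
    hv s (sg s u x) v = sgl s u x v := by
  by_cases h : v.val < p
  · rw [hv, if_pos h, sg, uc_idx h]
  · rw [hv, if_neg h, sg, uc_idx_eq hp h, sgl_add_p hp, tau_tau]

lemma sgl_th (hp : 2 ≤ p) (d : DihedralGroup (2 * p)) (u : ZMod (2 * p)) (x : DihedralGroup s)
    (w : ZMod (2 * p)) : sgl s u x (th p d w) = sgl s (th p d⁻¹ u) x w := by
  unfold sgl
  have e1 : th p d w = u ↔ w = th p d⁻¹ u := by
    constructor
    · rintro rfl; rw [th_th_inv]
    · rintro rfl; rw [th_inv_th]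
  have e2 : th p d w = u + (p : ZMod (2 * p)) ↔ w = th p d⁻¹ u + (p : ZMod (2 * p)) := by
    constructor
    · intro h
      have : th p d⁻¹ (th p d w) = th p d⁻¹ (u + (p : ZMod (2 * p))) := by rw [h]
      rwa [th_th_inv, th_add_p p _ _ hp] at this
    · intro h
      have : th p d w = th p d (th p d⁻¹ u + (p : ZMod (2 * p))) := by rw [h]
      rwa [th_add_p p _ _ hp, th_inv_th] at this
  by_cases h1 : th p d w = u
  · rw [if_pos h1, if_pos (e1.mp h1)]
  · rw [if_neg h1, if_neg (fun h => h1 (e1.mpr h))]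
    by_cases h2 : th p d w = u + (p : ZMod (2 * p))
    · rw [if_pos h2, if_pos (e2.mp h2)]
    · rw [if_neg h2, if_neg (fun h => h2 (e2.mpr h))]

lemma act_sg (hp : 2 ≤ p) (d : DihedralGroup (2 * p)) (u : ZMod (2 * p)) (x : DihedralGroup s) :
    act d (sg s u x) = sg s (th p d⁻¹ u) x := by
  funext i
  rw [act, hv_sg hp, sgl_th hp, sg]

lemma phi_sg (hp : 2 ≤ p) (d : DihedralGroup (2 * p)) (u : ZMod (2 * p)) (x : DihedralGroup s) :
    phi hp d (sg s u x) = sg s (th p d u) x := by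
  rw [phi_apply, act_sg hp, inv_inv]

lemma sg_uc (i : Fin p) (x : DihedralGroup s) : sg s (uc i) x = Pi.mulSingle i x := by
  funext j
  rw [sg, sgl]
  have e1 : uc j = uc i ↔ j = i := by
    constructor
    · intro h
      have := congrArg ZMod.val h
      rw [uc_val, uc_val] at this
      exact Fin.ext this
    · rintro rfl; rfl
  have e2 : uc j ≠ uc i + (p : ZMod (2 * p)) := by
    intro h
    have := congrArg ZMod.val h
    rw [uc_val, ZMod.val_add, uc_val, ZMod.val_natCast_of_lt (show p < 2 * p by omega),
      Nat.mod_eq_of_lt (by omega)] at this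
    omega
  by_cases h : j = i
  · subst h
    rw [if_pos rfl, Pi.mulSingle_eq_same]
  · rw [if_neg (fun hh => h (e1.mp hh)), if_neg e2, Pi.mulSingle_eq_of_ne h]

lemma sg_add_p (hp : 2 ≤ p) (u : ZMod (2 * p)) (x : DihedralGroup s) :
    sg s (u + (p : ZMod (2 * p))) x = sg s u (tau s x) := by
  funext j
  rw [sg, sg, sgl, sgl]
  by_cases h1 : uc j = u
  · rw [if_neg (h1 ▸ (fun h => add_p_ne hp u (by linear_combination -h))), if_pos h1,
      if_pos (by rw [h1, add_p_p])]
  · by_cases h2 : uc j = u + (p : ZMod (2 * p))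
    · rw [if_pos h2, if_neg h1, if_pos h2, tau_tau]
    · rw [if_neg h1, if_neg h2, if_neg h2,
        if_neg (fun h => h1 (by rw [h, add_p_p]))]

/-- The reflection generator placed at vertex `u`. -/
def gen (u : ZMod (2 * p)) : Fin p → DihedralGroup s := sg s u (sr 0)


lemma tau_sr (k : ZMod s) : tau s (sr k) = sr (1 - k) := rfl

lemma gen_sq (hp : 2 ≤ p) (u : ZMod (2 * p)) : (gen u : Fin p → DihedralGroup s) * gen u = 1 := by
  rw [gen, sg_mul hp, sr_mul_self, sg_one]

lemma key1 (hp : 2 ≤ p) {u w : ZMod (2 * p)} (h1 : u ≠ w)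
    (h2 : u ≠ w + (p : ZMod (2 * p))) :
    ((gen u : Fin p → DihedralGroup s) * gen w) ^ 2 = 1 := by
  have hwu : w ≠ u + (p : ZMod (2 * p)) := fun h => h2 (by rw [h, add_p_p])
  funext i
  rw [Pi.pow_apply, Pi.mul_apply, Pi.one_apply]
  show (sgl s u (sr 0) (uc i) * sgl s w (sr 0) (uc i)) ^ 2 = 1
  set v := uc i with hvdef
  unfold sgl
  by_cases hu : v = u
  · have nw : v ≠ w := fun h => h1 (hu.symm.trans h)
    have nwp : v ≠ w + (p : ZMod (2 * p)) := fun h => h2 (hu.symm.trans h)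
    rw [if_pos hu, if_neg nw, if_neg nwp, mul_one, pow_two, sr_mul_self]
  · by_cases hup : v = u + (p : ZMod (2 * p))
    · have nw : v ≠ w := fun h => hwu (h.symm.trans hup)
      have nwp : v ≠ w + (p : ZMod (2 * p)) := fun h => h1 (by
        have := hup.symm.trans h
        linear_combination this)
      rw [if_neg hu, if_pos hup, if_neg nw, if_neg nwp, mul_one, tau_sr, pow_two, sr_mul_self]
    · rw [if_neg hu, if_neg hup, one_mul]
      by_cases hw : v = w
      · rw [if_pos hw, pow_two, sr_mul_self]
      · by_cases hwp : v = w + (p : ZMod (2 * p))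
        · rw [if_neg hw, if_pos hwp, tau_sr, pow_two, sr_mul_self]
        · rw [if_neg hw, if_neg hwp, one_pow]

lemma r_pow_self {m : ℕ} : ((r 1 : DihedralGroup m)) ^ m = 1 := by
  rw [r_one_pow, ZMod.natCast_self, one_def]

lemma r_neg_one_pow {m : ℕ} : ((r (-1) : DihedralGroup m)) ^ m = 1 := by
  have h : (r (-1) : DihedralGroup m) = (r 1)⁻¹ :=
    eq_inv_of_mul_eq_one_left (by rw [r_mul_r, neg_add_cancel, one_def])
  rw [h, inv_pow, r_pow_self, inv_one]

lemma key2 (hp : 2 ≤ p) (u : ZMod (2 * p)) :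
    ((gen u : Fin p → DihedralGroup s) * gen (u + (p : ZMod (2 * p)))) ^ s = 1 := by
  funext i
  rw [Pi.pow_apply, Pi.mul_apply, Pi.one_apply]
  show (sgl s u (sr 0) (uc i) * sgl s (u + (p : ZMod (2 * p))) (sr 0) (uc i)) ^ s = 1
  set v := uc i with hvdef
  unfold sgl
  by_cases hu : v = u
  · have n1 : v ≠ u + (p : ZMod (2 * p)) := fun h => add_p_ne hp u (h.symm.trans hu)
    have n2 : v = u + (p : ZMod (2 * p)) + (p : ZMod (2 * p)) := by rw [add_p_p, hu]
    rw [if_pos hu, if_neg n1, if_pos n2, tau_sr, sr_mul_sr]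
    show (r (1 - 0 - 0) : DihedralGroup s) ^ s = 1
    rw [sub_zero, sub_zero, r_pow_self]
  · by_cases hup : v = u + (p : ZMod (2 * p))
    · have n2 : v ≠ u + (p : ZMod (2 * p)) + (p : ZMod (2 * p)) := by
        rw [add_p_p]; exact hu
      rw [if_neg hu, if_pos hup, if_pos hup, tau_sr, sr_mul_sr]
      show (r (0 - (1 - 0)) : DihedralGroup s) ^ s = 1
      rw [sub_zero, zero_sub, r_neg_one_pow]
    · have n2 : v ≠ u + (p : ZMod (2 * p)) + (p : ZMod (2 * p)) := by
        rw [add_p_p]; exact hu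
      rw [if_neg hu, if_neg hup, if_neg hup, if_neg n2, one_mul, one_pow]

lemma cast_ne_cast {a b : ℕ} (ha : a < 2 * p) (hb : b < 2 * p) (hne : a ≠ b) :
    ((a : ℕ) : ZMod (2 * p)) ≠ ((b : ℕ) : ZMod (2 * p)) := fun h =>
  hne (by
    have := congrArg ZMod.val h
    rwa [ZMod.val_natCast_of_lt ha, ZMod.val_natCast_of_lt hb] at this)


open SemidirectProduct in
lemma inr_inl_swap (hp : 2 ≤ p) (d : DihedralGroup (2 * p)) (n : Fin p → DihedralGroup s) :
    (inr d : (Fin p → DihedralGroup s) ⋊[phi hp] DihedralGroup (2 * p)) * inl n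
      = inl (phi hp d n) * inr d := by
  rw [inl_aut, mul_assoc, ← map_mul, inv_mul_cancel, map_one, mul_one]

open SemidirectProduct in
lemma mix_sq (hp : 2 ≤ p) (n : Fin p → DihedralGroup s) (d : DihedralGroup (2 * p)) :
    ((inl n : (Fin p → DihedralGroup s) ⋊[phi hp] DihedralGroup (2 * p)) * inr d) ^ 2
      = inl (n * phi hp d n) * inr (d * d) := by
  rw [pow_two, mul_assoc, ← mul_assoc (inr d), inr_inl_swap hp, mul_assoc, ← map_mul,
    ← mul_assoc, ← map_mul]

lemma phi_gen (hp : 2 ≤ p) (d : DihedralGroup (2 * p)) (u : ZMod (2 * p)) :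
    phi hp d (gen u : Fin p → DihedralGroup s) = gen (th p d u) :=
  phi_sg hp d u (sr 0)

/-- Images of the three generators. -/
def fGen (hp : 2 ≤ p) :
    Fin 3 → ((Fin p → DihedralGroup s) ⋊[phi hp] DihedralGroup (2 * p)) :=
  ![SemidirectProduct.inl (gen 0), SemidirectProduct.inr (sr 1), SemidirectProduct.inr (sr 0)]

open SemidirectProduct in
lemma Wsq (hp : 2 ≤ p) (j : ℕ) (hj : 1 ≤ j) :
    (((inl (gen 0) : (Fin p → DihedralGroup s) ⋊[phi hp] DihedralGroup (2 * p))
      * inr (sr 1)) * (inr (sr 0) * inr (sr 1)) ^ (j - 1)) ^ 2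
      = inl (gen 0 * gen ((j : ℕ) : ZMod (2 * p))) := by
  have hcast : (1 : ZMod (2 * p)) + ((j - 1 : ℕ) : ZMod (2 * p)) = ((j : ℕ) : ZMod (2 * p)) := by
    conv_rhs => rw [show j = (j - 1) + 1 by omega]
    push_cast
    ring
  have e1 : ((inr (sr 0) : (Fin p → DihedralGroup s) ⋊[phi hp] DihedralGroup (2 * p))
      * inr (sr 1)) ^ (j - 1) = inr (r ((j - 1 : ℕ) : ZMod (2 * p))) := by
    rw [← map_mul, sr_mul_sr, ← map_pow, sub_zero, r_one_pow]
  have hth : th p (sr ((j : ℕ) : ZMod (2 * p))) 0 = ((j : ℕ) : ZMod (2 * p)) := by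
    show ((j : ℕ) : ZMod (2 * p)) - 0 = _
    rw [sub_zero]
  rw [e1, mul_assoc, ← map_mul, sr_mul_r, hcast, mix_sq hp, phi_gen hp, hth, sr_mul_self,
    map_one, mul_one]

open SemidirectProduct in
lemma lift_rels (hp : 2 ≤ p) (hs : 2 ≤ s) :
    ∀ w ∈ relsStmt11 p s, FreeGroup.lift (fGen hp (s := s)) w = 1 := by
  have hF0 : FreeGroup.lift (fGen hp (s := s)) (FreeGroup.of (0 : Fin 3)) = inl (gen 0) := by
    rw [FreeGroup.lift_apply_of]; rfl
  have hF1 : FreeGroup.lift (fGen hp (s := s)) (FreeGroup.of (1 : Fin 3)) = inr (sr 1) := by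
    rw [FreeGroup.lift_apply_of]; rfl
  have hF2 : FreeGroup.lift (fGen hp (s := s)) (FreeGroup.of (2 : Fin 3)) = inr (sr 0) := by
    rw [FreeGroup.lift_apply_of]; rfl
  have hW : ∀ j : ℕ,
      (FreeGroup.lift (fGen hp (s := s)))
        ((FreeGroup.of (0 : Fin 3) * FreeGroup.of (1 : Fin 3)
          * (FreeGroup.of (2 : Fin 3) * FreeGroup.of (1 : Fin 3)) ^ (j - 1)))
        = (inl (gen 0) * inr (sr 1)) * (inr (sr 0) * inr (sr 1)) ^ (j - 1) := by
    intro j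
    rw [map_mul, map_mul, map_pow, map_mul, hF0, hF1, hF2]
  have hW1 := Wsq (s := s) (p := p) hp 1 le_rfl
  simp only [Nat.sub_self, pow_zero, mul_one, Nat.cast_one] at hW1
  intro w hw
  rcases hw with hw | ⟨j, ⟨hj1, hj2⟩, rfl⟩
  · simp only [Set.mem_insert_iff, Set.mem_singleton_iff] at hw
    rcases hw with rfl | rfl | rfl | rfl | rfl | rfl | rfl
    · rw [map_pow, hF0, ← map_pow, pow_two, gen_sq hp, map_one]
    · rw [map_pow, hF1, ← map_pow, pow_two, sr_mul_self, map_one]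
    · rw [map_pow, hF2, ← map_pow, pow_two, sr_mul_self, map_one]
    · -- (a*b)^4
      have h01 : (0 : ZMod (2 * p)) ≠ (1 : ZMod (2 * p)) := by
        have := cast_ne_cast (p := p) (a := 0) (b := 1) (by omega) (by omega) (by omega)
        push_cast at this
        exact this
      have h0p : (0 : ZMod (2 * p)) ≠ (1 : ZMod (2 * p)) + (p : ZMod (2 * p)) := by
        have := cast_ne_cast (p := p) (a := 0) (b := 1 + p) (by omega) (by omega) (by omega)
        push_cast at this
        exact this
      rw [map_pow, map_mul, hF0, hF1, show (4 : ℕ) = 2 * 2 from rfl, pow_mul, hW1,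
        ← map_pow, key1 hp h01 h0p, map_one]
    · -- (b*c)^(2p)
      rw [map_pow, map_mul, hF1, hF2, ← map_mul, sr_mul_sr, zero_sub, ← map_pow,
        r_neg_one_pow, map_one]
    · -- (a*c)^2
      have hth : th p (sr (0 : ZMod (2 * p))) 0 = 0 := by
        show (0 : ZMod (2 * p)) - 0 = 0
        rw [sub_zero]
      rw [map_pow, map_mul, hF0, hF2, pow_two, mul_assoc, ← mul_assoc (inr (sr 0)),
        inr_inl_swap hp, phi_gen hp, hth, mul_assoc, ← map_mul, sr_mul_self, map_one, mul_one,
        ← map_mul, gen_sq hp, map_one]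
    · -- (a*b*(c*b)^(p-1))^(2s)
      have hk := key2 (s := s) hp 0
      rw [zero_add] at hk
      rw [map_pow, hW p, pow_mul, Wsq hp p (by omega), ← map_pow, hk, map_one]
  · -- (a*b*(c*b)^(j-1))^4 for 2 ≤ j ≤ p - 1
    have hj0 : (0 : ZMod (2 * p)) ≠ ((j : ℕ) : ZMod (2 * p)) := by
      have := cast_ne_cast (p := p) (a := 0) (b := j) (by omega) (by omega) (by omega)
      push_cast at this
      exact this
    have hjp : (0 : ZMod (2 * p)) ≠ ((j : ℕ) : ZMod (2 * p)) + (p : ZMod (2 * p)) := by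
      have := cast_ne_cast (p := p) (a := 0) (b := j + p) (by omega) (by omega) (by omega)
      push_cast at this
      exact this
    rw [map_pow, hW j, show (4 : ℕ) = 2 * 2 from rfl, pow_mul, Wsq hp j (by omega),
      ← map_pow, key1 hp hj0 hjp, map_one]

/-- The forward homomorphism from the presented group to the semidirect product. -/
def fwd (hp : 2 ≤ p) (hs : 2 ≤ s) :
    PresentedGroup (relsStmt11 p s) →*
      ((Fin p → DihedralGroup s) ⋊[phi hp] DihedralGroup (2 * p)) :=
  PresentedGroup.toGroup (lift_rels hp hs)

lemma fwd_of0 (hp : 2 ≤ p) (hs : 2 ≤ s) :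
    fwd hp hs (PresentedGroup.of 0) = SemidirectProduct.inl (gen 0) := by
  rw [fwd, PresentedGroup.toGroup.of]; rfl

lemma fwd_of1 (hp : 2 ≤ p) (hs : 2 ≤ s) :
    fwd hp hs (PresentedGroup.of 1) = SemidirectProduct.inr (sr 1) := by
  rw [fwd, PresentedGroup.toGroup.of]; rfl

lemma fwd_of2 (hp : 2 ≤ p) (hs : 2 ≤ s) :
    fwd hp hs (PresentedGroup.of 2) = SemidirectProduct.inr (sr 0) := by
  rw [fwd, PresentedGroup.toGroup.of]; rfl


lemma dih_gen {m : ℕ} [NeZero m] (d : DihedralGroup m) :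
    d ∈ Subgroup.closure ({sr 0, sr 1} : Set (DihedralGroup m)) := by
  have h0 : (sr 0 : DihedralGroup m) ∈ Subgroup.closure ({sr 0, sr 1} : Set (DihedralGroup m)) :=
    Subgroup.subset_closure (Set.mem_insert _ _)
  have h1 : (sr 1 : DihedralGroup m) ∈ Subgroup.closure ({sr 0, sr 1} : Set (DihedralGroup m)) :=
    Subgroup.subset_closure (Set.mem_insert_of_mem _ rfl)
  have hr1 : (r 1 : DihedralGroup m) ∈ Subgroup.closure ({sr 0, sr 1} : Set (DihedralGroup m)) := by
    have : (sr 0 : DihedralGroup m) * sr 1 = r 1 := by rw [sr_mul_sr, sub_zero]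
    exact this ▸ mul_mem h0 h1
  have hrk : ∀ k : ZMod m, (r k : DihedralGroup m) ∈
      Subgroup.closure ({sr 0, sr 1} : Set (DihedralGroup m)) := by
    intro k
    have : (r 1 : DihedralGroup m) ^ k.val = r k := by
      rw [r_one_pow, ZMod.natCast_rightInverse k]
    exact this ▸ pow_mem hr1 k.val
  rcases d with k | k
  · exact hrk k
  · have : (r (-k) : DihedralGroup m) * sr 0 = sr k := by rw [r_mul_sr, zero_sub, neg_neg]
    exact this ▸ mul_mem (hrk (-k)) h0

/-- `sg u` as a monoid hom. -/
def sgM (hp : 2 ≤ p) (u : ZMod (2 * p)) : DihedralGroup s →* (Fin p → DihedralGroup s) where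
  toFun := sg s u
  map_one' := sg_one u
  map_mul' := fun x y => (sg_mul hp u x y).symm

lemma gen_add_p (hp : 2 ≤ p) (u : ZMod (2 * p)) :
    (gen (u + (p : ZMod (2 * p))) : Fin p → DihedralGroup s) = sg s u (sr 1) := by
  rw [gen, sg_add_p hp, tau_sr, sub_zero]

lemma sg_mem_closure (hp : 2 ≤ p) (u : ZMod (2 * p)) (x : DihedralGroup s) (hs : 2 ≤ s) :
    sg s u x ∈ Subgroup.closure (Set.range (gen : ZMod (2 * p) → Fin p → DihedralGroup s)) := by
  have : NeZero s := ⟨by omega⟩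
  have hx := dih_gen x
  have : sg s u x ∈ (Subgroup.closure ({sr 0, sr 1} : Set (DihedralGroup s))).map (sgM hp u) :=
    Subgroup.mem_map_of_mem _ hx
  rw [MonoidHom.map_closure] at this
  refine Subgroup.closure_mono ?_ this
  rintro y ⟨z, hz, rfl⟩
  rcases hz with rfl | rfl
  · exact ⟨u, rfl⟩
  · exact ⟨u + (p : ZMod (2 * p)), gen_add_p hp u⟩

lemma pi_gen (hp : 2 ≤ p) (hs : 2 ≤ s) (n : Fin p → DihedralGroup s) :
    n ∈ Subgroup.closure (Set.range (gen : ZMod (2 * p) → Fin p → DihedralGroup s)) := by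
  rw [← Finset.noncommProd_mulSingle n]
  refine Subgroup.noncommProd_mem _ _ ?_
  intro i _
  rw [← sg_uc]
  exact sg_mem_closure hp (uc i) (n i) hs

open SemidirectProduct in
lemma fwd_surj (hp : 2 ≤ p) (hs : 2 ≤ s) : Function.Surjective (fwd (s := s) (p := p) hp hs) := by
  rw [← MonoidHom.range_eq_top, Subgroup.eq_top_iff']
  have hinr : ∀ d : DihedralGroup (2 * p), inr d ∈ (fwd (s := s) hp hs).range := by
    intro d
    have hle : Subgroup.closure ({sr 0, sr 1} : Set (DihedralGroup (2 * p)))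
        ≤ (fwd (s := s) hp hs).range.comap inr := by
      rw [Subgroup.closure_le]
      rintro x (rfl | rfl)
      · exact ⟨PresentedGroup.of 2, fwd_of2 hp hs⟩
      · exact ⟨PresentedGroup.of 1, fwd_of1 hp hs⟩
    exact hle (dih_gen d)
  have hgen : ∀ u : ZMod (2 * p), inl (gen u : Fin p → DihedralGroup s)
      ∈ (fwd (s := s) hp hs).range := by
    intro u
    have hth : th p (r (-u)) 0 = u := by
      show (0 : ZMod (2 * p)) - (-u) = u
      rw [zero_sub, neg_neg]
    have : (inl (gen u : Fin p → DihedralGroup s)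
        : (Fin p → DihedralGroup s) ⋊[phi hp] DihedralGroup (2 * p))
        = inr (r (-u)) * inl (gen 0) * (inr (r (-u)))⁻¹ := by
      rw [← map_inv, ← inl_aut, phi_gen hp, hth]
    rw [this]
    exact mul_mem (mul_mem (hinr _) ⟨PresentedGroup.of 0, fwd_of0 hp hs⟩) (inv_mem (hinr _))
  have hinl : ∀ n : Fin p → DihedralGroup s,
      inl n ∈ (fwd (s := s) hp hs).range := by
    intro n
    have hle : Subgroup.closure (Set.range (gen : ZMod (2 * p) → Fin p → DihedralGroup s))
        ≤ (fwd (s := s) hp hs).range.comap inl := by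
      rw [Subgroup.closure_le]
      rintro x ⟨u, rfl⟩
      exact hgen u
    exact hle (pi_gen hp hs n)
  intro g
  rw [← inl_left_mul_inr_right g]
  exact mul_mem (hinl _) (hinr _)


section GenericGroup

variable {H : Type*} [Group H]

lemma sq_inv_self {x : H} (hx : x * x = 1) : x⁻¹ = x := inv_eq_of_mul_eq_one_left hx

lemma conj_pow_inv {x T : H} (hx : x * x = 1) (hc : x * T * x = T⁻¹) (m : ℕ) :
    x * T ^ m * x = (T ^ m)⁻¹ := by
  induction m with
  | zero => rw [pow_zero, mul_one, hx, inv_one]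
  | succ m ih =>
    have h1 : (x * T ^ m * x) * (x * T * x) = x * (T ^ m * T) * x := by
      have h2 : (x * T ^ m * x) * (x * T * x) = x * T ^ m * (x * x) * T * x := by group
      rw [h2, hx, mul_one]
      group
    rw [pow_succ, ← h1, ih, hc, ← mul_inv_rev, ← pow_succ', pow_succ]

lemma comm_of_sq {x y : H} (hx : x * x = 1) (hy : y * y = 1) (hxy : (x * y) * (x * y) = 1) :
    Commute x y := by
  have h1 : (x * y)⁻¹ = x * y := sq_inv_self hxy
  have h2 : (x * y)⁻¹ = y * x := by rw [mul_inv_rev, sq_inv_self hx, sq_inv_self hy]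
  exact (h2.symm.trans h1).symm

lemma conj3 {g x y z : H} (hg : g * g = 1) :
    g * (x * y * z) * g = (g * x * g) * (g * y * g) * (g * z * g) := by
  have h : (g * x * g) * (g * y * g) * (g * z * g) = g * x * (g * g) * y * (g * g) * z * g := by
    group
  rw [h, hg, mul_one, mul_one]
  group

/-- The function underlying a homomorphism out of a dihedral group. -/
def dihedralFun {m : ℕ} (x z : H) : DihedralGroup m → H
  | r k => z ^ k.val
  | sr k => x * z ^ k.val

variable {m : ℕ} [NeZero m] {x z : H}

lemma dihedral_pow_val (hz : z ^ m = 1) (n : ℕ) : z ^ n = z ^ ((n : ZMod m)).val := by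
  rw [ZMod.val_natCast]
  conv_lhs => rw [← Nat.div_add_mod n m]
  rw [pow_add, pow_mul, hz, one_pow, one_mul]

lemma dihedral_add_val (hz : z ^ m = 1) (k l : ZMod m) :
    z ^ k.val * z ^ l.val = z ^ ((k + l).val) := by
  rw [← pow_add, dihedral_pow_val hz (k.val + l.val), Nat.cast_add,
    ZMod.natCast_rightInverse k, ZMod.natCast_rightInverse l]

lemma dihedral_sub_val (hz : z ^ m = 1) (k l : ZMod m) :
    (z ^ k.val)⁻¹ * z ^ l.val = z ^ ((l - k).val) := by
  rw [inv_mul_eq_iff_eq_mul, dihedral_add_val hz k (l - k), add_sub_cancel]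

lemma dihedral_swap (hx : x * x = 1) (hc : x * z * x = z⁻¹) (n : ℕ) :
    z ^ n * x = x * (z ^ n)⁻¹ := by
  rw [← conj_pow_inv hx hc n]
  have h : x * (x * z ^ n * x) = (x * x) * (z ^ n * x) := by group
  rw [h, hx, one_mul]

/-- Homomorphism out of a dihedral group determined by an involution `x` and an element `z`
with `z^m = 1` and `x z x = z⁻¹`. -/
def dihedralToGroup (x z : H) (hx : x * x = 1) (hz : z ^ m = 1) (hc : x * z * x = z⁻¹) :
    DihedralGroup m →* H where
  toFun := dihedralFun x z
  map_one' := by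
    rw [show (1 : DihedralGroup m) = r 0 from one_def]
    show z ^ (0 : ZMod m).val = 1
    rw [ZMod.val_zero, pow_zero]
  map_mul' := fun a b => by
    rcases a with i | i <;> rcases b with j | j
    · show z ^ ((i + j).val) = z ^ i.val * z ^ j.val
      rw [dihedral_add_val hz]
    · show x * z ^ ((j - i).val) = z ^ i.val * (x * z ^ j.val)
      rw [← mul_assoc, dihedral_swap hx hc, mul_assoc, dihedral_sub_val hz]
    · show x * z ^ ((i + j).val) = (x * z ^ i.val) * z ^ j.val
      rw [mul_assoc, dihedral_add_val hz]
    · show z ^ ((j - i).val) = (x * z ^ i.val) * (x * z ^ j.val)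
      have h : (x * z ^ i.val) * (x * z ^ j.val) = x * (z ^ i.val * x) * z ^ j.val := by group
      rw [h, dihedral_swap hx hc]
      have h2 : x * (x * (z ^ i.val)⁻¹) * z ^ j.val = (x * x) * ((z ^ i.val)⁻¹ * z ^ j.val) := by
        group
      rw [h2, hx, one_mul, dihedral_sub_val hz]

@[simp] lemma dihedralToGroup_r (hx : x * x = 1) (hz : z ^ m = 1) (hc : x * z * x = z⁻¹)
    (k : ZMod m) : dihedralToGroup x z hx hz hc (r k) = z ^ k.val := rfl

@[simp] lemma dihedralToGroup_sr (hx : x * x = 1) (hz : z ^ m = 1) (hc : x * z * x = z⁻¹)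
    (k : ZMod m) : dihedralToGroup x z hx hz hc (sr k) = x * z ^ k.val := rfl

end GenericGroup


section PSide

variable (p s)

/-- Images of the generators in the presented group. -/
def oa : PresentedGroup (relsStmt11 p s) := .of 0
def ob : PresentedGroup (relsStmt11 p s) := .of 1
def oc : PresentedGroup (relsStmt11 p s) := .of 2

lemma rel_one {w : FreeGroup (Fin 3)} (hw : w ∈ relsStmt11 p s) :
    PresentedGroup.mk (relsStmt11 p s) w = 1 :=
  (QuotientGroup.eq_one_iff _).mpr (Subgroup.subset_normalClosure hw)

lemma mk_of (i : Fin 3) :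
    PresentedGroup.mk (relsStmt11 p s) (FreeGroup.of i) = PresentedGroup.of i := rfl

lemma h_a2 : oa s p * oa s p = 1 := by
  have h := rel_one s p (Set.mem_union_left _ (Set.mem_insert _ _))
  rwa [map_pow, mk_of, pow_two] at h

lemma h_b2 : ob s p * ob s p = 1 := by
  have h := rel_one s p
    (Set.mem_union_left _ (Set.mem_insert_of_mem _ (Set.mem_insert _ _)))
  rwa [map_pow, mk_of, pow_two] at h

lemma h_c2 : oc s p * oc s p = 1 := by
  have h := rel_one s p
    (Set.mem_union_left _
      (Set.mem_insert_of_mem _ (Set.mem_insert_of_mem _ (Set.mem_insert _ _))))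
  rwa [map_pow, mk_of, pow_two] at h

lemma h_ab4 : (oa s p * ob s p) ^ 4 = 1 := by
  have h := rel_one s p
    (Set.mem_union_left _
      (Set.mem_insert_of_mem _ (Set.mem_insert_of_mem _
        (Set.mem_insert_of_mem _ (Set.mem_insert _ _)))))
  rwa [map_pow, map_mul, mk_of, mk_of] at h

lemma h_bc2p : (ob s p * oc s p) ^ (2 * p) = 1 := by
  have h := rel_one s p
    (Set.mem_union_left _
      (Set.mem_insert_of_mem _ (Set.mem_insert_of_mem _ (Set.mem_insert_of_mem _
        (Set.mem_insert_of_mem _ (Set.mem_insert _ _))))))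
  rwa [map_pow, map_mul, mk_of, mk_of] at h

lemma h_ac2 : (oa s p * oc s p) ^ 2 = 1 := by
  have h := rel_one s p
    (Set.mem_union_left _
      (Set.mem_insert_of_mem _ (Set.mem_insert_of_mem _ (Set.mem_insert_of_mem _
        (Set.mem_insert_of_mem _ (Set.mem_insert_of_mem _ (Set.mem_insert _ _)))))))
  rwa [map_pow, map_mul, mk_of, mk_of] at h

lemma h_w2s : (oa s p * ob s p * (oc s p * ob s p) ^ (p - 1)) ^ (2 * s) = 1 := by
  have h := rel_one s p
    (Set.mem_union_left _
      (Set.mem_insert_of_mem _ (Set.mem_insert_of_mem _ (Set.mem_insert_of_mem _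
        (Set.mem_insert_of_mem _ (Set.mem_insert_of_mem _ (Set.mem_insert_of_mem _
          (Set.mem_singleton _))))))))
  rwa [map_pow, map_mul, map_mul, map_pow, map_mul, mk_of, mk_of, mk_of] at h

lemma h_wj4 {j : ℕ} (hj1 : 2 ≤ j) (hj2 : j ≤ p - 1) :
    (oa s p * ob s p * (oc s p * ob s p) ^ (j - 1)) ^ 4 = 1 := by
  have h := rel_one s p (Set.mem_union_right _ ⟨j, ⟨hj1, hj2⟩, rfl⟩)
  rwa [map_pow, map_mul, map_mul, map_pow, map_mul, mk_of, mk_of, mk_of] at h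

/-- The rotation `T = γβ` in the presented group. -/
def Tel : PresentedGroup (relsStmt11 p s) := oc s p * ob s p

lemma h_T2p : Tel s p ^ (2 * p) = 1 := by
  have hinv : (ob s p * oc s p)⁻¹ = Tel s p := by
    rw [mul_inv_rev, sq_inv_self (h_b2 s p), sq_inv_self (h_c2 s p), Tel]
  rw [← hinv, inv_pow, h_bc2p, inv_one]

/-- `ζ k = T^(k.val)`. -/
def zeta (k : ZMod (2 * p)) : PresentedGroup (relsStmt11 p s) := Tel s p ^ k.val

lemma zeta_nat (m : ℕ) : Tel s p ^ m = zeta s p ((m : ZMod (2 * p))) :=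
  dihedral_pow_val (h_T2p s p) m

lemma zeta_add (k l : ZMod (2 * p)) : zeta s p k * zeta s p l = zeta s p (k + l) :=
  dihedral_add_val (h_T2p s p) k l

lemma zeta_zero : zeta s p 0 = 1 := by rw [zeta, ZMod.val_zero, pow_zero]

lemma zeta_neg (k : ZMod (2 * p)) : (zeta s p k)⁻¹ = zeta s p (-k) :=
  inv_eq_of_mul_eq_one_right (by rw [zeta_add, add_neg_cancel, zeta_zero])

lemma zeta_one (hp : 2 ≤ p) : zeta s p 1 = Tel s p := by
  haveI : Fact (1 < 2 * p) := ⟨by omega⟩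
  rw [zeta, ZMod.val_one, pow_one]

/-- The conjugates `a_u` of `α` in the presented group. -/
def aE (u : ZMod (2 * p)) : PresentedGroup (relsStmt11 p s) :=
  (zeta s p u)⁻¹ * oa s p * zeta s p u

lemma aE_zero : aE s p 0 = oa s p := by
  rw [aE, zeta_zero, inv_one, one_mul, mul_one]

lemma aE_sq (u : ZMod (2 * p)) : aE s p u * aE s p u = 1 := by
  have h : aE s p u * aE s p u = (zeta s p u)⁻¹ * (oa s p * oa s p) * zeta s p u := by
    rw [aE]; group
  rw [h, h_a2, mul_one, inv_mul_cancel]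

lemma aE_inv (u : ZMod (2 * p)) : (aE s p u)⁻¹ = aE s p u := sq_inv_self (aE_sq s p u)

lemma conj_zeta_aE (k u : ZMod (2 * p)) :
    (zeta s p k)⁻¹ * aE s p u * zeta s p k = aE s p (u + k) := by
  have h : (zeta s p k)⁻¹ * aE s p u * zeta s p k
      = (zeta s p u * zeta s p k)⁻¹ * oa s p * (zeta s p u * zeta s p k) := by
    rw [aE, mul_inv_rev]; group
  rw [h, zeta_add, aE]

/-- Conjugation by `ζ k` as a homomorphism. -/
def cHom (k : ZMod (2 * p)) :
    PresentedGroup (relsStmt11 p s) →* PresentedGroup (relsStmt11 p s) :=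
  (MulAut.conj ((zeta s p k)⁻¹)).toMonoidHom

lemma cHom_aE (k u : ZMod (2 * p)) : cHom s p k (aE s p u) = aE s p (u + k) := by
  have h : cHom s p k (aE s p u) = (zeta s p k)⁻¹ * aE s p u * zeta s p k := by
    rw [cHom]
    show (zeta s p k)⁻¹ * aE s p u * ((zeta s p k)⁻¹)⁻¹ = _
    rw [inv_inv]
  rw [h, conj_zeta_aE]

lemma h_cT : oc s p * Tel s p * oc s p = (Tel s p)⁻¹ := by
  have h1 : oc s p * Tel s p * oc s p = (oc s p * oc s p) * (ob s p * oc s p) := by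
    rw [Tel]; group
  rw [h1, h_c2, one_mul, Tel, mul_inv_rev, sq_inv_self (h_b2 s p), sq_inv_self (h_c2 s p)]

lemma h_bT : ob s p * Tel s p * ob s p = (Tel s p)⁻¹ := by
  have h1 : ob s p * Tel s p * ob s p = ob s p * oc s p * (ob s p * ob s p) := by
    rw [Tel]; group
  rw [h1, h_b2, mul_one, Tel, mul_inv_rev, sq_inv_self (h_b2 s p), sq_inv_self (h_c2 s p)]

lemma h_cZ (k : ZMod (2 * p)) : oc s p * zeta s p k * oc s p = (zeta s p k)⁻¹ :=
  conj_pow_inv (h_c2 s p) (h_cT s p) k.val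

lemma h_bZ (k : ZMod (2 * p)) : ob s p * zeta s p k * ob s p = (zeta s p k)⁻¹ :=
  conj_pow_inv (h_b2 s p) (h_bT s p) k.val

lemma h_cA : oc s p * oa s p * oc s p = oa s p := by
  have h := h_ac2 s p
  rw [pow_two] at h
  have h2 : oa s p * (oc s p * oa s p * oc s p) = (oa s p * oc s p) * (oa s p * oc s p) := by
    group
  have h3 : oa s p * (oc s p * oa s p * oc s p) = 1 := by rw [h2, h]
  have h4 := inv_eq_of_mul_eq_one_right h3
  rw [sq_inv_self (h_a2 s p)] at h4
  exact h4.symm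

lemma h_bA (hp : 2 ≤ p) : ob s p * oa s p * ob s p = aE s p 1 := by
  have h1 : aE s p 1 = (Tel s p)⁻¹ * oa s p * Tel s p := by rw [aE, zeta_one s p hp]
  have h2 : (Tel s p)⁻¹ = ob s p * oc s p := by
    rw [Tel, mul_inv_rev, sq_inv_self (h_b2 s p), sq_inv_self (h_c2 s p)]
  rw [h1, h2, Tel]
  have h3 : ob s p * oc s p * oa s p * (oc s p * ob s p)
      = ob s p * (oc s p * oa s p * oc s p) * ob s p := by group
  rw [h3, h_cA]

lemma conj_c_aE (hp : 2 ≤ p) (u : ZMod (2 * p)) :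
    oc s p * aE s p u * oc s p = aE s p (-u) := by
  have h : oc s p * aE s p u * oc s p
      = (oc s p * (zeta s p u)⁻¹ * oc s p) * (oc s p * oa s p * oc s p)
        * (oc s p * zeta s p u * oc s p) := by
    rw [aE, ← conj3 (h_c2 s p)]
  have hinv : oc s p * (zeta s p u)⁻¹ * oc s p = zeta s p u := by
    have := congrArg (·⁻¹) (h_cZ s p u)
    simp only [mul_inv_rev, inv_inv, sq_inv_self (h_c2 s p)] at this
    rw [← mul_assoc] at this
    exact this
  rw [h, hinv, h_cA, h_cZ, aE, ← zeta_neg, inv_inv]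

lemma conj_b_aE (hp : 2 ≤ p) (u : ZMod (2 * p)) :
    ob s p * aE s p u * ob s p = aE s p (1 - u) := by
  have h : ob s p * aE s p u * ob s p
      = (ob s p * (zeta s p u)⁻¹ * ob s p) * (ob s p * oa s p * ob s p)
        * (ob s p * zeta s p u * ob s p) := by
    rw [aE, ← conj3 (h_b2 s p)]
  have hinv : ob s p * (zeta s p u)⁻¹ * ob s p = zeta s p u := by
    have := congrArg (·⁻¹) (h_bZ s p u)
    simp only [mul_inv_rev, inv_inv, sq_inv_self (h_b2 s p)] at this
    rw [← mul_assoc] at this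
    exact this
  rw [h, hinv, h_bA s p hp, h_bZ]
  have h2 : zeta s p u * aE s p 1 * (zeta s p u)⁻¹
      = (zeta s p (-u))⁻¹ * aE s p 1 * zeta s p (-u) := by
    rw [← zeta_neg, inv_inv]
  rw [h2, conj_zeta_aE]
  congr 1
  ring

lemma WP (hp : 2 ≤ p) (j : ℕ) (hj : 1 ≤ j) :
    (oa s p * ob s p * (oc s p * ob s p) ^ (j - 1)) ^ 2 = aE s p 0 * aE s p ((j : ℕ)) := by
  set m := j - 1 with hm
  have hTm : (oc s p * ob s p) ^ m = Tel s p ^ m := rfl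
  have hswap : ob s p * Tel s p ^ m * ob s p = (Tel s p ^ m)⁻¹ :=
    conj_pow_inv (h_b2 s p) (h_bT s p) m
  have e1 : (oa s p * ob s p * Tel s p ^ m) ^ 2
      = oa s p * (ob s p * Tel s p ^ m * ob s p) * (ob s p * oa s p * ob s p) * Tel s p ^ m := by
    rw [pow_two]
    have e2 : oa s p * (ob s p * Tel s p ^ m * ob s p) * (ob s p * oa s p * ob s p)
        * Tel s p ^ m
        = oa s p * ob s p * Tel s p ^ m * (ob s p * ob s p) * oa s p * ob s p
          * Tel s p ^ m := by group
    rw [e2, h_b2, mul_one]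
    group
  have hcast : (1 : ZMod (2 * p)) + ((m : ℕ) : ZMod (2 * p)) = ((j : ℕ) : ZMod (2 * p)) := by
    rw [hm]
    conv_rhs => rw [show j = (j - 1) + 1 by omega]
    push_cast
    ring
  rw [hTm, e1, hswap, h_bA s p hp]
  have e3 : oa s p * (Tel s p ^ m)⁻¹ * aE s p 1 * Tel s p ^ m
      = oa s p * ((Tel s p ^ m)⁻¹ * aE s p 1 * Tel s p ^ m) := by group
  rw [e3, zeta_nat, conj_zeta_aE, hcast, aE_zero]

lemma h_comm0 (hp : 2 ≤ p) {j : ℕ} (hj1 : 1 ≤ j) (hj2 : j ≤ p - 1) :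
    Commute (aE s p 0) (aE s p ((j : ℕ))) := by
  have h4 : (oa s p * ob s p * (oc s p * ob s p) ^ (j - 1)) ^ 4 = 1 := by
    rcases Nat.lt_or_ge j 2 with h | h
    · have hj : j = 1 := by omega
      subst hj
      simpa using h_ab4 s p
    · exact h_wj4 s p h hj2
  rw [show (4 : ℕ) = 2 * 2 from rfl, pow_mul, WP s p hp j hj1, pow_two] at h4
  exact comm_of_sq (aE_sq s p 0) (aE_sq s p _) h4

lemma h_pair0 (hp : 2 ≤ p) : (aE s p 0 * aE s p ((p : ℕ))) ^ s = 1 := by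
  have h := h_w2s s p
  rw [pow_mul, WP s p hp p (by omega)] at h
  exact h

lemma h_pair (hp : 2 ≤ p) (u : ZMod (2 * p)) :
    (aE s p u * aE s p (u + ((p : ℕ) : ZMod (2 * p)))) ^ s = 1 := by
  have h := congrArg (cHom s p u) (h_pair0 s p hp)
  rw [map_one, map_pow, map_mul, cHom_aE, cHom_aE, zero_add, add_comm] at h
  exact h

lemma h_comm (hp : 2 ≤ p) {u w : ZMod (2 * p)} (h1 : u ≠ w)
    (h2 : u ≠ w + ((p : ℕ) : ZMod (2 * p))) : Commute (aE s p u) (aE s p w) := by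
  have h2p : ((p : ℕ) : ZMod (2 * p)) + ((p : ℕ) : ZMod (2 * p)) = 0 := by
    have h0 : ((2 * p : ℕ) : ZMod (2 * p)) = 0 := ZMod.natCast_self _
    push_cast at h0
    linear_combination h0
  have hval : ∀ v₁ v₂ : ZMod (2 * p), v₁ ≠ v₂ → (v₂ - v₁) ≠ 0 := by
    intro v₁ v₂ hne h0
    exact hne (show v₁ = v₂ by linear_combination -h0)
  have hvp : (w - u) ≠ ((p : ℕ) : ZMod (2 * p)) := by
    intro h0
    exact h2 (by linear_combination -h0 - h2p)
  have hd0 : (w - u) ≠ 0 := hval u w h1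
  rcases Nat.lt_or_ge ((w - u).val) p with hlt | hge
  · -- d ≤ p - 1
    have hd1 : 1 ≤ (w - u).val := by
      rcases Nat.eq_zero_or_pos ((w - u).val) with h | h
      · exact absurd (by rwa [← ZMod.val_eq_zero]) hd0
      · exact h
    have hc := (h_comm0 s p hp (j := (w - u).val) hd1 (by omega)).map (cHom s p u)
    rw [cHom_aE, cHom_aE, zero_add, ZMod.natCast_rightInverse (w - u),
      sub_add_cancel] at hc
    exact hc
  · -- use u - w instead
    have hne : w ≠ u := fun h => h1 h.symm
    have hd0' : (u - w) ≠ 0 := hval w u hne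
    have hval_neg : (u - w).val = 2 * p - (w - u).val := by
      have : u - w = -(w - u) := by ring
      rw [this, ZMod.neg_val, if_neg hd0]
    have hlt2 : (w - u).val < 2 * p := (w - u).val_lt
    have hne_p : (w - u).val ≠ p := by
      intro h
      apply hvp
      have hx : w - u = (((w - u).val : ℕ) : ZMod (2 * p)) :=
        (ZMod.natCast_rightInverse (w - u)).symm
      rw [h] at hx
      exact hx
    have hd1 : 1 ≤ (u - w).val ∧ (u - w).val ≤ p - 1 := by
      constructor <;> omega
    have hc := (h_comm0 s p hp hd1.1 hd1.2).map (cHom s p w)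
    rw [cHom_aE, cHom_aE, zero_add, ZMod.natCast_rightInverse (u - w),
      sub_add_cancel] at hc
    exact hc.symm

end PSide


section Backward

variable (p s)

/-- The homomorphism `D_{2p} →* P`. -/
def g2 : DihedralGroup (2 * p) →* PresentedGroup (relsStmt11 p s) :=
  dihedralToGroup (oc s p) (Tel s p) (h_c2 s p) (h_T2p s p) (h_cT s p)

lemma g2_r (k : ZMod (2 * p)) : g2 s p (r k) = zeta s p k := rfl

lemma g2_sr (k : ZMod (2 * p)) : g2 s p (sr k) = oc s p * zeta s p k := rfl

variable {p s}

lemma psi_conj (u : ZMod (2 * p)) :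
    aE s p u * (aE s p u * aE s p (u + ((p : ℕ) : ZMod (2 * p)))) * aE s p u
      = (aE s p u * aE s p (u + ((p : ℕ) : ZMod (2 * p))))⁻¹ := by
  have e : aE s p u * (aE s p u * aE s p (u + ((p : ℕ) : ZMod (2 * p)))) * aE s p u
      = (aE s p u * aE s p u) * (aE s p (u + ((p : ℕ) : ZMod (2 * p))) * aE s p u) := by group
  rw [e, aE_sq, one_mul, mul_inv_rev, aE_inv, aE_inv]

/-- The homomorphisms `D_s →* P`, one for each coordinate. -/
def psi (hp : 2 ≤ p) (hs : 2 ≤ s) (i : Fin p) :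
    DihedralGroup s →* PresentedGroup (relsStmt11 p s) :=
  haveI : NeZero s := ⟨by omega⟩
  dihedralToGroup (aE s p (uc i)) (aE s p (uc i) * aE s p (uc i + ((p : ℕ) : ZMod (2 * p))))
    (aE_sq s p (uc i)) (h_pair s p hp (uc i)) (psi_conj (uc i))

lemma psi_commute (hp : 2 ≤ p) (hs : 2 ≤ s) :
    Pairwise fun i j => ∀ x y, Commute (psi hp hs i x) (psi hp hs j y) := by
  haveI : NeZero s := ⟨by omega⟩
  intro i j hij x y
  have hiv : ((i : ℕ) : ZMod (2 * p)) = uc i := rfl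
  have n1 : uc i ≠ uc j :=
    cast_ne_cast (by omega) (by omega) (fun h => hij (Fin.ext h))
  have hcast : ∀ l : Fin p, uc l + ((p : ℕ) : ZMod (2 * p))
      = (((l : ℕ) + p : ℕ) : ZMod (2 * p)) := by
    intro l
    rw [uc]
    push_cast
    ring
  have n2 : uc i ≠ uc j + ((p : ℕ) : ZMod (2 * p)) := by
    rw [hcast]
    exact cast_ne_cast (by omega) (by omega) (by omega)
  have n3 : uc i + ((p : ℕ) : ZMod (2 * p)) ≠ uc j := by
    rw [hcast]
    exact cast_ne_cast (by omega) (by omega) (by omega)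
  have n4 : uc i + ((p : ℕ) : ZMod (2 * p)) ≠ uc j + ((p : ℕ) : ZMod (2 * p)) := fun h =>
    n1 (by linear_combination h)
  have c_xx : Commute (aE s p (uc i)) (aE s p (uc j)) := h_comm s p hp n1 n2
  have c_xy : Commute (aE s p (uc i)) (aE s p (uc j + ((p : ℕ) : ZMod (2 * p)))) :=
    h_comm s p hp n2 (by rw [add_p_p]; exact n1)
  have c_yx : Commute (aE s p (uc i + ((p : ℕ) : ZMod (2 * p)))) (aE s p (uc j)) :=
    h_comm s p hp n3 n4
  have c_yy : Commute (aE s p (uc i + ((p : ℕ) : ZMod (2 * p))))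
      (aE s p (uc j + ((p : ℕ) : ZMod (2 * p)))) :=
    h_comm s p hp n4 (by rw [add_p_p]; exact n3)
  have c_xz := c_xx.mul_right c_xy
  have c_zx := c_xx.mul_left c_yx
  have c_zz := c_xz.mul_left (c_yx.mul_right c_yy)
  rcases x with k | k <;> rcases y with l | l <;>
    simp only [psi, dihedralToGroup_r, dihedralToGroup_sr]
  · exact c_zz.pow_pow _ _
  · exact (c_zx.mul_right (c_zz.pow_right _)).pow_left _
  · exact (c_xz.pow_right _).mul_left (c_zz.pow_pow _ _)
  · exact (c_xx.mul_right (c_xz.pow_right _)).mul_left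
      ((c_zx.mul_right (c_zz.pow_right _)).pow_left _)

/-- The homomorphism `D_s^p →* P`. -/
def g1 (hp : 2 ≤ p) (hs : 2 ≤ s) :
    (Fin p → DihedralGroup s) →* PresentedGroup (relsStmt11 p s) :=
  MonoidHom.noncommPiCoprod (psi hp hs) (psi_commute hp hs)

lemma g1_gen (hp : 2 ≤ p) (hs : 2 ≤ s) (u : ZMod (2 * p)) :
    g1 hp hs (gen u) = aE s p u := by
  haveI : NeZero s := ⟨by omega⟩
  haveI : Fact (1 < s) := ⟨by omega⟩
  by_cases h : u.val < p
  · rw [gen, ← uc_idx h, sg_uc, g1, MonoidHom.noncommPiCoprod_mulSingle]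
    show aE s p (uc (idx u)) * _ ^ ((0 : ZMod s)).val = _
    rw [ZMod.val_zero, pow_zero, mul_one, uc_idx h]
  · have hu : uc (idx u) + ((p : ℕ) : ZMod (2 * p)) = u := uc_idx' h
    rw [gen, ← hu, sg_add_p hp, tau_sr, sub_zero, sg_uc, g1,
      MonoidHom.noncommPiCoprod_mulSingle]
    show aE s p (uc (idx u)) * (aE s p (uc (idx u))
      * aE s p (uc (idx u) + ((p : ℕ) : ZMod (2 * p)))) ^ ((1 : ZMod s)).val = _
    rw [ZMod.val_one, pow_one, ← mul_assoc, aE_sq, one_mul]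

lemma closure_gen_top (hp : 2 ≤ p) (hs : 2 ≤ s) :
    Subgroup.closure (Set.range (gen : ZMod (2 * p) → Fin p → DihedralGroup s)) = ⊤ :=
  (Subgroup.eq_top_iff' _).mpr (fun n => pi_gen hp hs n)

lemma compat (hp : 2 ≤ p) (hs : 2 ≤ s) : ∀ d : DihedralGroup (2 * p),
    (g1 hp hs).comp ((phi hp d).toMonoidHom)
      = (MulAut.conj (g2 s p d)).toMonoidHom.comp (g1 hp hs) := by
  intro d
  apply MonoidHom.eq_of_eqOn_dense (closure_gen_top hp hs)
  rintro x ⟨u, rfl⟩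
  show g1 hp hs (phi hp d (gen u)) = g2 s p d * g1 hp hs (gen u) * (g2 s p d)⁻¹
  rw [phi_gen hp, g1_gen hp hs, g1_gen hp hs]
  have e1 : ∀ k : ZMod (2 * p), zeta s p k * aE s p u * (zeta s p k)⁻¹ = aE s p (u - k) := by
    intro k
    have h := conj_zeta_aE s p (-k) u
    rw [← zeta_neg, inv_inv] at h
    rw [h, sub_eq_add_neg]
  rcases d with k | k
  · rw [g2_r]
    show aE s p (u - k) = _
    rw [e1]
  · rw [g2_sr]
    have e2 : (oc s p * zeta s p k) * aE s p u * (oc s p * zeta s p k)⁻¹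
        = oc s p * (zeta s p k * aE s p u * (zeta s p k)⁻¹) * oc s p := by
      rw [mul_inv_rev, sq_inv_self (h_c2 s p)]
      group
    rw [e2, e1, conj_c_aE s p hp]
    show aE s p (k - u) = aE s p (-(u - k))
    rw [neg_sub]

/-- The backward homomorphism. -/
def bwd (hp : 2 ≤ p) (hs : 2 ≤ s) :
    ((Fin p → DihedralGroup s) ⋊[phi hp] DihedralGroup (2 * p))
      →* PresentedGroup (relsStmt11 p s) :=
  SemidirectProduct.lift (g1 hp hs) (g2 s p) (compat hp hs)

lemma bwd_fwd (hp : 2 ≤ p) (hs : 2 ≤ s) : ∀ x,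
    bwd hp hs (fwd hp hs x) = x := by
  haveI : Fact (1 < 2 * p) := ⟨by omega⟩
  have h : (bwd hp hs).comp (fwd hp hs) = MonoidHom.id _ := by
    apply PresentedGroup.ext
    intro x
    fin_cases x
    · show bwd hp hs (fwd hp hs (PresentedGroup.of 0)) = PresentedGroup.of 0
      rw [fwd_of0 hp hs, bwd, SemidirectProduct.lift_inl, g1_gen hp hs, aE_zero]
      rfl
    · show bwd hp hs (fwd hp hs (PresentedGroup.of 1)) = PresentedGroup.of 1
      rw [fwd_of1 hp hs, bwd, SemidirectProduct.lift_inr, g2_sr, zeta_one s p hp]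
      have e : oc s p * Tel s p = (oc s p * oc s p) * ob s p := by rw [Tel]; group
      rw [e, h_c2, one_mul]
      rfl
    · show bwd hp hs (fwd hp hs (PresentedGroup.of 2)) = PresentedGroup.of 2
      rw [fwd_of2 hp hs, bwd, SemidirectProduct.lift_inr, g2_sr, zeta_zero, mul_one]
      rfl
  intro x
  exact DFunLike.congr_fun h x

lemma fwd_bijective (hp : 2 ≤ p) (hs : 2 ≤ s) :
    Function.Bijective (fwd (s := s) (p := p) hp hs) := by
  constructor
  · intro x y hxy
    rw [← bwd_fwd hp hs x, ← bwd_fwd hp hs y, hxy]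
  · exact fwd_surj hp hs

end Backward

end Stmt11Aux

/-- The group `[4, 2p | 4^{p-2}, 2s]` is isomorphic to `D_s^p ⋊ D_{2p}` and has order
`(2s)^p · 4p`. -/
theorem stmt11 (p s : ℕ) (hp : 2 ≤ p) (hs : 2 ≤ s) :
    (∃ φ : DihedralGroup (2 * p) →* MulAut (Fin p → DihedralGroup s),
      Nonempty (PresentedGroup (relsStmt11 p s) ≃*
        (Fin p → DihedralGroup s) ⋊[φ] DihedralGroup (2 * p))) ∧
    Nat.card (PresentedGroup (relsStmt11 p s)) = (2 * s) ^ p * (4 * p) := by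
  haveI : NeZero p := ⟨by omega⟩
  haveI : NeZero s := ⟨by omega⟩
  constructor
  · exact ⟨Stmt11Aux.phi hp,
      ⟨MulEquiv.ofBijective _ (Stmt11Aux.fwd_bijective hp hs)⟩⟩
  · have hcard : Nat.card (PresentedGroup (relsStmt11 p s))
        = Nat.card ((Fin p → DihedralGroup s) ⋊[Stmt11Aux.phi hp] DihedralGroup (2 * p)) :=
      Nat.card_congr (Equiv.ofBijective _ (Stmt11Aux.fwd_bijective hp hs))
    have e2 : ((Fin p → DihedralGroup s) ⋊[Stmt11Aux.phi hp] DihedralGroup (2 * p))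
        ≃ (Fin p → DihedralGroup s) × DihedralGroup (2 * p) :=
      { toFun := fun x => (x.left, x.right)
        invFun := fun y => ⟨y.1, y.2⟩
        left_inv := fun x => by cases x; rfl
        right_inv := fun y => rfl }
    rw [hcard, Nat.card_congr e2, Nat.card_prod, Nat.card_pi]
    simp only [DihedralGroup.nat_card, Finset.prod_const, Finset.card_univ, Fintype.card_fin]
    ring
end

section
/- In the quotient of the Coxeter group [4,4,3] (generators ρ₀,ρ₁,ρ₂,ρ₃, relations ρᵢ²=(ρ₀ρ₁)⁴=(ρ₁ρ₂)⁴=(ρ₂ρ₃)³=(ρ₀ρ₂)²=(ρ₀ρ₃)²=(ρ₁ρ₃)²=1) the relation (ρ₀β^{-2}ρ₀β²)² = 1 with β = ρ₁ρ₂ρ₃ implies (ρ₀ρ₁ρ₂ρ₁)⁴ = 1. -/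
/-- In any quotient of the Coxeter group `[4,4,3]`, the relation `(ρ₀β⁻²ρ₀β²)² = 1` with
`β = ρ₁ρ₂ρ₃` implies `(ρ₀ρ₁ρ₂ρ₁)⁴ = 1`. -/
theorem stmt14 {G : Type*} [Group G] (ρ₀ ρ₁ ρ₂ ρ₃ : G)
    (h0 : ρ₀ ^ 2 = 1) (h1 : ρ₁ ^ 2 = 1) (h2 : ρ₂ ^ 2 = 1) (h3 : ρ₃ ^ 2 = 1)
    (h01 : (ρ₀ * ρ₁) ^ 4 = 1) (h12 : (ρ₁ * ρ₂) ^ 4 = 1) (h23 : (ρ₂ * ρ₃) ^ 3 = 1)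
    (h02 : (ρ₀ * ρ₂) ^ 2 = 1) (h03 : (ρ₀ * ρ₃) ^ 2 = 1) (h13 : (ρ₁ * ρ₃) ^ 2 = 1)
    (hrel : (ρ₀ * (ρ₁ * ρ₂ * ρ₃) ^ (-2 : ℤ) * ρ₀ * (ρ₁ * ρ₂ * ρ₃) ^ (2 : ℤ)) ^ 2 = 1) :
    (ρ₀ * ρ₁ * ρ₂ * ρ₁) ^ 4 = 1 := by
  have s0 : ρ₀ * ρ₀ = 1 := by rw [← sq]; exact h0
  have s1 : ρ₁ * ρ₁ = 1 := by rw [← sq]; exact h1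
  have s2 : ρ₂ * ρ₂ = 1 := by rw [← sq]; exact h2
  have s3 : ρ₃ * ρ₃ = 1 := by rw [← sq]; exact h3
  have s0' : ∀ x : G, ρ₀ * (ρ₀ * x) = x := by intro x; rw [← mul_assoc, s0, one_mul]
  have s1' : ∀ x : G, ρ₁ * (ρ₁ * x) = x := by intro x; rw [← mul_assoc, s1, one_mul]
  have s2' : ∀ x : G, ρ₂ * (ρ₂ * x) = x := by intro x; rw [← mul_assoc, s2, one_mul]
  have s3' : ∀ x : G, ρ₃ * (ρ₃ * x) = x := by intro x; rw [← mul_assoc, s3, one_mul]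
  have i0 : ρ₀⁻¹ = ρ₀ := inv_eq_of_mul_eq_one_right s0
  have i1 : ρ₁⁻¹ = ρ₁ := inv_eq_of_mul_eq_one_right s1
  have i2 : ρ₂⁻¹ = ρ₂ := inv_eq_of_mul_eq_one_right s2
  have i3 : ρ₃⁻¹ = ρ₃ := inv_eq_of_mul_eq_one_right s3
  have comm : ∀ a b : G, a⁻¹ = a → b⁻¹ = b → (a*b)^2 = 1 → b * a = a * b := by
    intro a b ia ib h
    have : a * b = (a*b)⁻¹ := by
      rw [eq_inv_iff_mul_eq_one, ← sq]; exact h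
    rw [mul_inv_rev, ia, ib] at this
    exact this.symm
  have c20 : ρ₂ * ρ₀ = ρ₀ * ρ₂ := comm _ _ i0 i2 h02
  have c30 : ρ₃ * ρ₀ = ρ₀ * ρ₃ := comm _ _ i0 i3 h03
  have c31 : ρ₃ * ρ₁ = ρ₁ * ρ₃ := comm _ _ i1 i3 h13
  have c20' : ∀ x : G, ρ₂ * (ρ₀ * x) = ρ₀ * (ρ₂ * x) := by
    intro x; rw [← mul_assoc, c20, mul_assoc]
  have c30' : ∀ x : G, ρ₃ * (ρ₀ * x) = ρ₀ * (ρ₃ * x) := by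
    intro x; rw [← mul_assoc, c30, mul_assoc]
  have c31' : ∀ x : G, ρ₃ * (ρ₁ * x) = ρ₁ * (ρ₃ * x) := by
    intro x; rw [← mul_assoc, c31, mul_assoc]
  have e2 : (ρ₁ * ρ₂ * ρ₃) ^ (2 : ℤ) = (ρ₁ * ρ₂ * ρ₃) * (ρ₁ * ρ₂ * ρ₃) := by
    rw [zpow_two]
  have hA : ρ₀ * (ρ₁ * ρ₂ * ρ₃) ^ (-2 : ℤ) * ρ₀ * (ρ₁ * ρ₂ * ρ₃) ^ (2 : ℤ)
      = (ρ₃ * ρ₂ * ρ₃) * ((ρ₀ * ρ₁ * ρ₂ * ρ₁) * (ρ₀ * ρ₁ * ρ₂ * ρ₁)) * (ρ₃ * ρ₂ * ρ₃) := by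
    rw [zpow_neg, e2]
    simp only [mul_inv_rev, i0, i1, i2, i3, mul_assoc, c20', c30', c31', s0', s1', s2', s3',
      c20, c30, c31, s0, s1, s2, s3, mul_one, one_mul]
  have hc2 : (ρ₃ * ρ₂ * ρ₃) * (ρ₃ * ρ₂ * ρ₃) = 1 := by
    simp only [mul_assoc, s3', s2', s3]
  set x := ρ₀ * ρ₁ * ρ₂ * ρ₁ with hx
  set c := ρ₃ * ρ₂ * ρ₃ with hc
  rw [hA] at hrel
  have cc' : ∀ y : G, c * (c * y) = y := by
    intro y; rw [← mul_assoc, hc2, one_mul]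
  have hrel' : c * (x * x) * c * (c * (x * x) * c) = 1 := by rw [← sq]; exact hrel
  have key : c * (x * x * (x * x)) * c = 1 := by
    calc c * (x * x * (x * x)) * c = c * (x * x) * c * (c * (x * x) * c) := by
          simp only [mul_assoc, cc']
      _ = 1 := hrel'
  have hx4 : x ^ 4 = x * x * (x * x) := by rw [show (4:ℕ) = 2 + 2 from rfl, pow_add, sq]
  rw [hx4]
  calc x * x * (x * x) = c * (c * (x * x * (x * x)) * c) * c := by
        simp only [mul_assoc, hc2, cc', mul_one, one_mul]
    _ = c * 1 * c := by rw [key]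
    _ = 1 := by rw [mul_one, hc2]
end
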